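/- Let α ∈ ℂ with Re(α) < 0 and let f : ℝ → ℂ be Z-almost automorphic. Then x₁(t) = ∫_{−∞}^{t} e^{α(t−s)} f(s) ds is well defined and is the unique almost automorphic solution of the scalar equation x'(t) = α x(t) + f(t), i.e. the unique almost automorphic function x satisfying x(t) = x(s) + ∫_s^t (α x(u) + f(u)) du for all s ≤ t. -/

import Mathlib

open MeasureTheory Filter Topology

/-- Bounded, piecewise continuous scalar function: continuous on ℝ ∖ ℤ with finite
one-sided limits at every integer. -/
def BddPCc (f : ℝ → ℂ) : Prop :=
  (∃ C : ℝ, ∀ t : ℝ, ‖f t‖ ≤ C) ∧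
  ContinuousOn f {t : ℝ | ∀ n : ℤ, t ≠ (n : ℝ)} ∧
  ∀ n : ℤ, (∃ L : ℂ, Tendsto f (𝓝[<] (n : ℝ)) (𝓝 L)) ∧
           (∃ R : ℂ, Tendsto f (𝓝[>] (n : ℝ)) (𝓝 R))

/-- `ℤ`-almost automorphic scalar functions. -/
def ZAlmostAutomorphicC (f : ℝ → ℂ) : Prop :=
  BddPCc f ∧
  ∀ s : ℕ → ℤ, ∃ (φ : ℕ → ℕ) (g : ℝ → ℂ), StrictMono φ ∧
    (∀ t : ℝ, Tendsto (fun n => f (t + (s (φ n) : ℝ))) atTop (𝓝 (g t))) ∧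
    (∀ t : ℝ, Tendsto (fun n => g (t - (s (φ n) : ℝ))) atTop (𝓝 (f t)))

/-- Almost automorphic scalar functions in the sense of Bochner. -/
def AlmostAutomorphicC (f : ℝ → ℂ) : Prop :=
  (∃ C : ℝ, ∀ t : ℝ, ‖f t‖ ≤ C) ∧ Continuous f ∧
  ∀ s : ℕ → ℝ, ∃ (φ : ℕ → ℕ) (g : ℝ → ℂ), StrictMono φ ∧
    (∀ t : ℝ, Tendsto (fun n => f (t + s (φ n))) atTop (𝓝 (g t))) ∧
    (∀ t : ℝ, Tendsto (fun n => g (t - s (φ n))) atTop (𝓝 (f t)))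

open Set intervalIntegral


section Aux

variable {α : ℂ}

lemma expIic_int {b : ℝ} (hb : 0 < b) (t : ℝ) :
    IntegrableOn (fun s : ℝ => Real.exp (b * s)) (Iic t) := by
  have key : ∀ y : ℝ, ∫ x in y..t, Real.exp (b * x) = b⁻¹ * (Real.exp (b * t) - Real.exp (b * y)) := by
    intro y
    rw [intervalIntegral.integral_comp_mul_left Real.exp hb.ne', integral_exp, smul_eq_mul]
  refine integrableOn_Iic_of_intervalIntegral_norm_bounded (Real.exp (b * t) / b) t
    (fun i : ℝ => ((Real.continuous_exp.comp (continuous_const.mul continuous_id)).integrableOn_Ioc)) tendsto_id ?_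
  filter_upwards with y
  simp only [id_eq, Real.norm_eq_abs, Real.abs_exp, key]
  rw [div_eq_inv_mul]
  have := Real.exp_pos (b * y)
  have hbi : (0:ℝ) < b⁻¹ := by positivity
  nlinarith

lemma expIic_val {b : ℝ} (hb : 0 < b) (t : ℝ) :
    ∫ s in Iic t, Real.exp (b * s) = Real.exp (b * t) / b := by
  have key : ∀ y : ℝ, ∫ x in y..t, Real.exp (b * x) = b⁻¹ * (Real.exp (b * t) - Real.exp (b * y)) := by
    intro y
    rw [intervalIntegral.integral_comp_mul_left Real.exp hb.ne', integral_exp, smul_eq_mul]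
  refine tendsto_nhds_unique
    (intervalIntegral_tendsto_integral_Iic t (expIic_int hb t) tendsto_id) ?_
  simp_rw [key]
  have h1 : Tendsto (fun y : ℝ => Real.exp (b * y)) atBot (𝓝 0) :=
    Real.tendsto_exp_atBot.comp (Tendsto.const_mul_atBot hb tendsto_id)
  have := ((tendsto_const_nhds (x := Real.exp (b*t))).sub h1).const_mul b⁻¹
  simpa [div_eq_inv_mul] using this

lemma knorm (α : ℂ) (r : ℝ) : ‖Complex.exp (α * (r : ℂ))‖ = Real.exp (α.re * r) := by
  rw [Complex.norm_exp]
  congr 1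
  simp [Complex.mul_re]

lemma knorm' (α : ℂ) (t s : ℝ) :
    ‖Complex.exp (α * ((t : ℂ) - (s : ℂ)))‖ = Real.exp (α.re * (t - s)) := by
  rw [show ((t : ℂ) - (s : ℂ)) = ((t - s : ℝ) : ℂ) by push_cast; ring, knorm]

lemma hasDerivAt_cexp_real (β : ℂ) (x : ℝ) :
    HasDerivAt (fun y : ℝ => Complex.exp (β * (y : ℂ))) (β * Complex.exp (β * (x : ℂ))) x := by
  have h1 : HasDerivAt (fun z : ℂ => Complex.exp (β * z)) (β * Complex.exp (β * (x:ℂ))) (x : ℂ) := by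
    simpa [mul_comm, Function.comp_def] using
      (Complex.hasDerivAt_exp (β * (x:ℂ))).comp (x : ℂ) ((hasDerivAt_id ((x:ℂ))).const_mul β)
  exact h1.comp_ofReal

lemma cexp_sub_one_norm_le (hα : α.re < 0) {d : ℝ} (hd : 0 ≤ d) :
    ‖Complex.exp (α * (d : ℂ)) - 1‖ ≤ ‖α‖ * d := by
  have key := Convex.norm_image_sub_le_of_norm_hasDerivWithin_le
    (f := fun y : ℝ => Complex.exp (α * (y : ℂ)))
    (f' := fun y : ℝ => α * Complex.exp (α * (y : ℂ))) (s := Icc (0:ℝ) d) (C := ‖α‖)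
    (fun x _ => (hasDerivAt_cexp_real α x).hasDerivWithinAt)
    (fun x hx => by
      rw [norm_mul, knorm]
      have h1 : Real.exp (α.re * x) ≤ 1 := by
        rw [Real.exp_le_one_iff]
        exact mul_nonpos_of_nonpos_of_nonneg hα.le hx.1
      nlinarith [norm_nonneg α, Real.exp_nonneg (α.re * x)])
    (convex_Icc 0 d) (Set.left_mem_Icc.2 hd) (Set.right_mem_Icc.2 hd)
  simpa [Real.norm_of_nonneg hd] using key

end Aux

section Ker

variable {α : ℂ} {C : ℝ} {h : ℝ → ℂ}

/-- The convolution operator. -/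
noncomputable def Tc (α : ℂ) (h : ℝ → ℂ) (t : ℝ) : ℂ :=
  ∫ s in Set.Iic t, Complex.exp (α * ((t:ℂ) - (s:ℂ))) * h s

lemma kmeas (α : ℂ) (hm : AEStronglyMeasurable h volume) (t : ℝ) {S : Set ℝ} :
    AEStronglyMeasurable (fun s : ℝ => Complex.exp (α * ((t:ℂ) - (s:ℂ))) * h s)
      (volume.restrict S) :=
  ((Complex.continuous_exp.comp
      (continuous_const.mul (continuous_const.sub Complex.continuous_ofReal))).aestronglyMeasurable).mul
    hm.restrict

lemma kptbound (hC : ∀ u, ‖h u‖ ≤ C) (t s : ℝ) :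
    ‖Complex.exp (α * ((t:ℂ) - (s:ℂ))) * h s‖ ≤
      C * Real.exp (α.re * t) * Real.exp (-α.re * s) := by
  rw [norm_mul, knorm']
  have h1 : Real.exp (α.re * (t - s)) = Real.exp (α.re * t) * Real.exp (-α.re * s) := by
    rw [← Real.exp_add]; ring_nf
  calc Real.exp (α.re * (t - s)) * ‖h s‖ ≤ Real.exp (α.re * (t - s)) * C :=
        mul_le_mul_of_nonneg_left (hC s) (Real.exp_nonneg _)
    _ = C * Real.exp (α.re * t) * Real.exp (-α.re * s) := by rw [h1]; ring

lemma dom_int (hα : α.re < 0) (C t : ℝ) :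
    IntegrableOn (fun s : ℝ => C * Real.exp (α.re * t) * Real.exp (-α.re * s)) (Iic t) :=
  (expIic_int (by linarith) t).const_mul _

lemma kint (hα : α.re < 0) (hm : AEStronglyMeasurable h volume) (hC : ∀ u, ‖h u‖ ≤ C) (t : ℝ) :
    IntegrableOn (fun s : ℝ => Complex.exp (α * ((t:ℂ) - (s:ℂ))) * h s) (Iic t) := by
  refine Integrable.mono' (dom_int hα C t) (kmeas α hm t) ?_
  exact ae_of_all _ fun s => kptbound hC t s

lemma Tbound (hα : α.re < 0) (hm : AEStronglyMeasurable h volume) (hC : ∀ u, ‖h u‖ ≤ C) (t : ℝ) :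
    ‖Tc α h t‖ ≤ C / (-α.re) := by
  have := norm_integral_le_of_norm_le (dom_int hα C t) (ae_of_all _ fun s => kptbound hC t s)
  refine this.trans ?_
  rw [MeasureTheory.integral_const_mul, expIic_val (by linarith : (0:ℝ) < -α.re) t]
  have h1 : Real.exp (α.re * t) * Real.exp (-α.re * t) = 1 := by
    rw [← Real.exp_add, show α.re * t + -α.re * t = 0 by ring, Real.exp_zero]
  have h2 : C * Real.exp (α.re * t) * (Real.exp (-α.re * t) / (-α.re)) =
      C * (Real.exp (α.re * t) * Real.exp (-α.re * t)) / (-α.re) := by ring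
  rw [h2, h1, mul_one]

lemma Tshift (α : ℂ) (h : ℝ → ℂ) (t m : ℝ) :
    Tc α (fun s => h (s + m)) t = Tc α h (t + m) := by
  have key := (measurePreserving_add_right volume m).setIntegral_preimage_emb
    (measurableEmbedding_addRight m)
    (fun u : ℝ => Complex.exp (α * (((t + m : ℝ):ℂ) - (u:ℂ))) * h u) (Iic (t + m))
  rw [Tc, Tc, ← key, show (fun x : ℝ => x + m) ⁻¹' (Iic (t + m)) = Iic t from by ext x; simp]
  refine setIntegral_congr_fun measurableSet_Iic fun x _ => ?_
  push_cast
  ring_nf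

end Ker

section Lip

variable {α : ℂ} {C : ℝ} {h : ℝ → ℂ}

lemma Tdiff (hα : α.re < 0) (hm : AEStronglyMeasurable h volume) (hC : ∀ u, ‖h u‖ ≤ C)
    {s t : ℝ} (hst : s ≤ t) :
    Tc α h t - Tc α h s = (Complex.exp (α * ((t:ℂ) - (s:ℂ))) - 1) * Tc α h s +
      ∫ u in Ioc s t, Complex.exp (α * ((t:ℂ) - (u:ℂ))) * h u := by
  have h1 : Tc α h t = (∫ u in Iic s, Complex.exp (α * ((t:ℂ) - (u:ℂ))) * h u) +
      ∫ u in Ioc s t, Complex.exp (α * ((t:ℂ) - (u:ℂ))) * h u := by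
    rw [Tc, ← setIntegral_union (Iic_disjoint_Ioc le_rfl) measurableSet_Ioc
      ((kint hα hm hC t).mono_set (Iic_subset_Iic.2 hst))
      ((kint hα hm hC t).mono_set (fun x hx => hx.2)), Iic_union_Ioc_eq_Iic hst]
  have h2 : (∫ u in Iic s, Complex.exp (α * ((t:ℂ) - (u:ℂ))) * h u) =
      Complex.exp (α * ((t:ℂ) - (s:ℂ))) * Tc α h s := by
    rw [Tc, ← MeasureTheory.integral_const_mul]
    refine setIntegral_congr_fun measurableSet_Iic fun u _ => ?_
    rw [← mul_assoc, ← Complex.exp_add]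
    congr 2
    ring
  rw [h1, h2]
  ring

lemma Tlip (hα : α.re < 0) (hm : AEStronglyMeasurable h volume) (hC : ∀ u, ‖h u‖ ≤ C)
    (x y : ℝ) :
    ‖Tc α h x - Tc α h y‖ ≤ (‖α‖ * (C / (-α.re)) + C) * |x - y| := by
  have hC0 : 0 ≤ C := le_trans (norm_nonneg _) (hC 0)
  have main : ∀ s t : ℝ, s ≤ t →
      ‖Tc α h t - Tc α h s‖ ≤ (‖α‖ * (C / (-α.re)) + C) * (t - s) := by
    intro s t hst
    rw [Tdiff hα hm hC hst]
    have hIoc : ‖∫ u in Ioc s t, Complex.exp (α * ((t:ℂ) - (u:ℂ))) * h u‖ ≤ C * (t - s) := by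
      have := norm_setIntegral_le_of_norm_le_const
        (s := Ioc s t) (C := C)
        (f := fun u : ℝ => Complex.exp (α * ((t:ℂ) - (u:ℂ))) * h u)
        (by rw [Real.volume_Ioc]; exact ENNReal.ofReal_lt_top)
        (fun u hu => by
          rw [norm_mul, knorm']
          have h1 : Real.exp (α.re * (t - u)) ≤ 1 := by
            rw [Real.exp_le_one_iff]
            exact mul_nonpos_of_nonpos_of_nonneg hα.le (by linarith [hu.2])
          nlinarith [hC u, norm_nonneg (h u), Real.exp_nonneg (α.re * (t - u))])
      rwa [Real.volume_real_Ioc, max_eq_left (by linarith)] at this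
    have hfirst : ‖(Complex.exp (α * ((t:ℂ) - (s:ℂ))) - 1) * Tc α h s‖ ≤
        (‖α‖ * (t - s)) * (C / (-α.re)) := by
      rw [norm_mul]
      have he : ‖Complex.exp (α * ((t:ℂ) - (s:ℂ))) - 1‖ ≤ ‖α‖ * (t - s) := by
        have := cexp_sub_one_norm_le hα (d := t - s) (by linarith)
        rwa [show ((t - s : ℝ):ℂ) = ((t:ℂ) - (s:ℂ)) by push_cast; ring] at this
      have hb := Tbound hα hm hC s
      have h0 : (0:ℝ) ≤ C / (-α.re) := div_nonneg hC0 (by linarith)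
      nlinarith [norm_nonneg (Tc α h s), norm_nonneg (Complex.exp (α * ((t:ℂ) - (s:ℂ))) - 1)]
    calc ‖_ + _‖ ≤ _ := norm_add_le _ _
      _ ≤ (‖α‖ * (t - s)) * (C / (-α.re)) + C * (t - s) := add_le_add hfirst hIoc
      _ = (‖α‖ * (C / (-α.re)) + C) * (t - s) := by ring
  rcases le_total y x with hyx | hxy
  · rw [abs_of_nonneg (by linarith)]
    exact main y x hyx
  · rw [abs_of_nonpos (by linarith), ← norm_neg, neg_sub]
    have := main x y hxy
    linarith [this]

lemma Tcont (hα : α.re < 0) (hm : AEStronglyMeasurable h volume) (hC : ∀ u, ‖h u‖ ≤ C) :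
    Continuous (Tc α h) := by
  have hC0 : 0 ≤ C := le_trans (norm_nonneg _) (hC 0)
  have hL : 0 ≤ ‖α‖ * (C / (-α.re)) + C := by
    have : (0:ℝ) ≤ C / (-α.re) := div_nonneg hC0 (by linarith)
    positivity
  refine (LipschitzWith.of_dist_le_mul (K := Real.toNNReal (‖α‖ * (C / (-α.re)) + C))
    fun x y => ?_).continuous
  rw [dist_eq_norm, Real.dist_eq, Real.coe_toNNReal _ hL]
  exact Tlip hα hm hC x y

lemma Tdct (hα : α.re < 0) {hs : ℕ → ℝ → ℂ} {hinf : ℝ → ℂ}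
    (hm : ∀ n, AEStronglyMeasurable (hs n) volume)
    (hminf : AEStronglyMeasurable hinf volume)
    (hC : ∀ n u, ‖hs n u‖ ≤ C)
    (hlim : ∀ u, Tendsto (fun n => hs n u) atTop (𝓝 (hinf u))) (t : ℝ) :
    Tendsto (fun n => Tc α (hs n) t) atTop (𝓝 (Tc α hinf t)) := by
  refine tendsto_integral_of_dominated_convergence
    (fun s : ℝ => C * Real.exp (α.re * t) * Real.exp (-α.re * s))
    (fun n => kmeas α (hm n) t) (dom_int hα C t)
    (fun n => ae_of_all _ fun s => kptbound (hC n) t s)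
    (ae_of_all _ fun s => ?_)
  exact tendsto_const_nhds.mul (hlim s)

end Lip

section Meas

lemma intS_compl : {t : ℝ | ∀ n : ℤ, t ≠ (n : ℝ)}ᶜ = Set.range ((↑) : ℤ → ℝ) := by
  ext x
  simp only [Set.mem_compl_iff, Set.mem_setOf_eq, not_forall, not_not, Set.mem_range]
  constructor
  · rintro ⟨n, hn⟩; exact ⟨n, hn.symm⟩
  · rintro ⟨n, hn⟩; exact ⟨n, hn.symm⟩

lemma intS_open : IsOpen {t : ℝ | ∀ n : ℤ, t ≠ (n : ℝ)} := by
  rw [← isClosed_compl_iff, intS_compl]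
  exact Int.isClosedEmbedding_coe_real.isClosed_range

lemma intS_ae : ∀ᵐ x : ℝ, x ∈ {t : ℝ | ∀ n : ℤ, t ≠ (n : ℝ)} := by
  rw [ae_iff]
  have : {x : ℝ | ¬ x ∈ {t : ℝ | ∀ n : ℤ, t ≠ (n : ℝ)}} = Set.range ((↑) : ℤ → ℝ) := by
    rw [← intS_compl]; rfl
  rw [this]
  exact Set.Countable.measure_zero (Set.countable_range _) _

lemma bddPCc_aesm {f : ℝ → ℂ} (hf : BddPCc f) : AEStronglyMeasurable f volume := by
  have h1 : AEMeasurable f (volume.restrict {t : ℝ | ∀ n : ℤ, t ≠ (n : ℝ)}) :=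
    hf.2.1.aemeasurable intS_open.measurableSet
  rw [MeasureTheory.Measure.restrict_eq_self_of_ae_mem intS_ae] at h1
  exact h1.aestronglyMeasurable

lemma bdd_intervalIntegrable {w : ℝ → ℂ} {D : ℝ} (hm : AEStronglyMeasurable w volume)
    {c d : ℝ} (hD : ∀ x ∈ Set.uIcc c d, ‖w x‖ ≤ D) :
    IntervalIntegrable w volume c d := by
  rw [intervalIntegrable_iff]
  refine Integrable.mono' (g := fun _ : ℝ => D)
    (integrableOn_const (C := D) measure_Ioc_lt_top.ne) hm.restrict ?_
  filter_upwards [ae_restrict_mem measurableSet_Ioc] with x hx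
  exact hD x (Set.Ioc_subset_Icc_self hx)

lemma aesm_shift {g : ℝ → ℂ} (hm : AEStronglyMeasurable g volume) (m : ℝ) :
    AEStronglyMeasurable (fun u : ℝ => g (u + m)) volume :=
  hm.comp_quasiMeasurePreserving (measurePreserving_add_right volume m).quasiMeasurePreserving

end Meas

/-- For `Re α < 0` and `f` `ℤ`-almost automorphic, `x₁(t) = ∫_{-∞}^t e^{α(t-s)} f(s) ds`
is well defined and is the unique almost automorphic solution of `x' = α x + f`
(understood in the integrated sense). -/
theorem unique_aa_solution_re_neg (α : ℂ) (hα : α.re < 0)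
    (f : ℝ → ℂ) (hf : ZAlmostAutomorphicC f) :
    (∀ t : ℝ, IntegrableOn (fun s : ℝ => Complex.exp (α * (t - s)) * f s) (Set.Iic t)) ∧
    AlmostAutomorphicC (fun t : ℝ => ∫ s in Set.Iic t, Complex.exp (α * (t - s)) * f s) ∧
    (∀ s t : ℝ, s ≤ t →
      (∫ u in Set.Iic t, Complex.exp (α * (t - u)) * f u) =
        (∫ u in Set.Iic s, Complex.exp (α * (s - u)) * f u) +
          ∫ u in s..t,
            (α * (∫ r in Set.Iic u, Complex.exp (α * (u - r)) * f r) + f u)) ∧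
    (∀ y : ℝ → ℂ, AlmostAutomorphicC y →
      (∀ s t : ℝ, s ≤ t → y t = y s + ∫ u in s..t, (α * y u + f u)) →
      y = fun t : ℝ => ∫ s in Set.Iic t, Complex.exp (α * (t - s)) * f s) := by
  classical
  obtain ⟨hbdd, hseq⟩ := hf
  obtain ⟨⟨C₀, hC₀⟩, hfc, hflim⟩ := hbdd
  set C := max C₀ 0 with hCdef
  have hC : ∀ t, ‖f t‖ ≤ C := fun t => (hC₀ t).trans (le_max_left _ _)
  have hC0 : (0:ℝ) ≤ C := le_max_right _ _
  have hfm : AEStronglyMeasurable f volume := bddPCc_aesm ⟨⟨C₀, hC₀⟩, hfc, hflim⟩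
  have hb : (0:ℝ) < -α.re := by linarith
  set L : ℝ := ‖α‖ * (C / (-α.re)) + C with hLdef
  have part1 : ∀ t : ℝ, IntegrableOn (fun s : ℝ => Complex.exp (α * (t - s)) * f s)
      (Set.Iic t) := fun t => kint hα hfm hC t
  have hx₁bdd : ∀ t, ‖Tc α f t‖ ≤ C / (-α.re) := Tbound hα hfm hC
  have hx₁cont : Continuous (Tc α f) := Tcont hα hfm hC
  have part2 : AlmostAutomorphicC (Tc α f) := by
    refine ⟨⟨C / (-α.re), hx₁bdd⟩, hx₁cont, ?_⟩
    intro s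
    obtain ⟨rinf, _, φ₀, hφ₀, hrlim⟩ := (isCompact_Icc (a := (0:ℝ)) (b := 1)).tendsto_subseq
      (x := fun n => Int.fract (s n)) (fun n => ⟨Int.fract_nonneg _, (Int.fract_lt_one _).le⟩)
    obtain ⟨φ₁, g, hφ₁, hg1, hg2⟩ := hseq (fun n => ⌊s (φ₀ n)⌋)
    set mR : ℕ → ℝ := fun n => ((⌊s (φ₀ (φ₁ n))⌋ : ℤ) : ℝ) with hmRdef
    set rR : ℕ → ℝ := fun n => Int.fract (s (φ₀ (φ₁ n))) with hrRdef
    have hsum : ∀ n, mR n + rR n = s (φ₀ (φ₁ n)) := fun n => Int.floor_add_fract _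
    have hrlim' : Tendsto rR atTop (𝓝 rinf) := by
      have := hrlim.comp hφ₁.tendsto_atTop
      exact this
    have hgC : ∀ u, ‖g u‖ ≤ C := fun u =>
      le_of_tendsto (hg1 u).norm (Eventually.of_forall fun n => hC _)
    have hgm : AEStronglyMeasurable g volume :=
      (aemeasurable_of_tendsto_metrizable_ae' (μ := volume)
        (f := fun n => fun u : ℝ => f (u + mR n))
        (fun n => (aesm_shift hfm (mR n)).aemeasurable)
        (ae_of_all _ fun u => hg1 u)).aestronglyMeasurable
    refine ⟨φ₀ ∘ φ₁, fun t => Tc α g (t + rinf), hφ₀.comp hφ₁, ?_, ?_⟩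
    · -- forward convergence
      intro t
      simp only [Function.comp_apply]
      have he1 : ∀ n, Tc α f (t + s (φ₀ (φ₁ n))) = Tc α (fun u => f (u + mR n)) (t + rR n) := by
        intro n
        rw [Tshift]
        congr 1
        have := hsum n
        linarith
      have hmain : Tendsto (fun n => Tc α (fun u => f (u + mR n)) (t + rinf)) atTop
          (𝓝 (Tc α g (t + rinf))) :=
        Tdct hα (fun n => aesm_shift hfm (mR n)) hgm (fun n u => hC _) (fun u => hg1 u) (t + rinf)
      have herr : Tendsto (fun n => Tc α (fun u => f (u + mR n)) (t + rR n) -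
          Tc α (fun u => f (u + mR n)) (t + rinf)) atTop (𝓝 0) := by
        refine squeeze_zero_norm (a := fun n => L * |rR n - rinf|) (fun n => ?_) ?_
        · have := Tlip hα (aesm_shift hfm (mR n)) (fun u => hC _) (t + rR n) (t + rinf)
          simpa [hLdef, show t + rR n - (t + rinf) = rR n - rinf by ring] using this
        · have : Tendsto (fun n => L * |rR n - rinf|) atTop (𝓝 (L * |rinf - rinf|)) :=
            (((hrlim'.sub_const rinf).abs).const_mul L)
          simpa using this
      have hfun : (fun n => Tc α f (t + s (φ₀ (φ₁ n)))) = fun n =>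
          (Tc α (fun u => f (u + mR n)) (t + rR n) - Tc α (fun u => f (u + mR n)) (t + rinf)) +
          Tc α (fun u => f (u + mR n)) (t + rinf) := funext fun n => by rw [he1 n]; ring
      rw [hfun]
      simpa using herr.add hmain
    · -- backward convergence
      intro t
      simp only [Function.comp_apply]
      have he2 : ∀ n, Tc α (fun u => g (u + (-(mR n)))) t = Tc α g (t - mR n) := by
        intro n
        rw [Tshift, ← sub_eq_add_neg]
      have hmain : Tendsto (fun n => Tc α g (t - mR n)) atTop (𝓝 (Tc α f t)) := by
        have := Tdct hα (C := C) (fun n => aesm_shift hgm (-(mR n))) hfm (fun n u => hgC _)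
          (fun u => by simpa [sub_eq_add_neg] using hg2 u) t
        simpa [he2] using this
      have herr : Tendsto (fun n => Tc α g (t - s (φ₀ (φ₁ n)) + rinf) -
          Tc α g (t - mR n)) atTop (𝓝 0) := by
        refine squeeze_zero_norm (a := fun n => L * |rinf - rR n|) (fun n => ?_) ?_
        · have := Tlip hα hgm hgC (t - s (φ₀ (φ₁ n)) + rinf) (t - mR n)
          have harg : t - s (φ₀ (φ₁ n)) + rinf - (t - mR n) = rinf - rR n := by
            have := hsum n; linarith
          simpa [hLdef, harg] using this
        · have : Tendsto (fun n => L * |rinf - rR n|) atTop (𝓝 (L * |rinf - rinf|)) :=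
            ((tendsto_const_nhds.sub hrlim').abs).const_mul L
          simpa using this
      have hfun : (fun n => Tc α g (t - s (φ₀ (φ₁ n)) + rinf)) = fun n =>
          (Tc α g (t - s (φ₀ (φ₁ n)) + rinf) - Tc α g (t - mR n)) + Tc α g (t - mR n) :=
        funext fun n => by ring
      rw [hfun]
      simpa using herr.add hmain
    -- ### Part 3: the integral equation
  have hR : ∀ n : ℤ, Tendsto f (𝓝[>] (n:ℝ)) (𝓝 ((hflim n).2.choose)) :=
    fun n => (hflim n).2.choose_spec
  set ftil : ℝ → ℂ := fun u =>
    if h : ∃ n : ℤ, ((n:ℝ)) = u then ((hflim ⌊u⌋).2).choose else f u with hftil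
  have hP : ∀ u : ℝ, Tendsto f (𝓝[>] u) (𝓝 (ftil u)) := by
    intro u
    by_cases hu : ∃ n : ℤ, ((n:ℝ)) = u
    · obtain ⟨n, rfl⟩ := hu
      simp only [hftil, dif_pos (⟨n, rfl⟩ : ∃ k : ℤ, ((k:ℝ)) = (n:ℝ)), Int.floor_intCast]
      exact hR n
    · have huS : u ∈ {t : ℝ | ∀ n : ℤ, t ≠ (n:ℝ)} := fun n hn => hu ⟨n, hn.symm⟩
      have hca : ContinuousAt f u := hfc.continuousAt (intS_open.mem_nhds huS)
      simp only [hftil, dif_neg hu]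
      exact hca.tendsto.mono_left nhdsWithin_le_nhds
  have hftilC : ∀ u, ‖ftil u‖ ≤ C := fun u =>
    le_of_tendsto (hP u).norm (Eventually.of_forall fun x => hC x)
  have hfeq : f =ᵐ[volume] ftil := by
    filter_upwards [intS_ae] with u hu
    have hu' : ¬ ∃ n : ℤ, ((n:ℝ)) = u := fun ⟨n, hn⟩ => hu n hn.symm
    simp only [hftil, dif_neg hu']
  have hftilm : AEStronglyMeasurable ftil volume := hfm.congr hfeq
  set w : ℝ → ℂ := fun x => Complex.exp (-(α * (x:ℂ))) * f x with hwdef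
  have hwm : AEStronglyMeasurable w volume :=
    ((Complex.continuous_exp.comp
      (continuous_const.mul Complex.continuous_ofReal).neg).aestronglyMeasurable).mul hfm
  have hwnorm : ∀ x : ℝ, ‖w x‖ = Real.exp (-α.re * x) * ‖f x‖ := by
    intro x
    rw [hwdef]
    rw [norm_mul, show -(α * (x:ℂ)) = ((-α)) * (x:ℂ) by ring, knorm, Complex.neg_re]
  have hwint : ∀ c d : ℝ, IntervalIntegrable w volume c d := by
    intro c d
    refine bdd_intervalIntegrable hwm (D := C * Real.exp (-α.re * (|c| + |d|))) ?_
    intro x hx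
    have hx' := hx
    rw [Set.uIcc, Set.mem_Icc] at hx'
    have hxle : x ≤ |c| + |d| := by
      refine hx'.2.trans (max_le ?_ ?_)
      · exact (le_abs_self c).trans (le_add_of_nonneg_right (abs_nonneg d))
      · exact (le_abs_self d).trans (le_add_of_nonneg_left (abs_nonneg c))
    rw [hwnorm]
    have he : Real.exp (-α.re * x) ≤ Real.exp (-α.re * (|c| + |d|)) :=
      Real.exp_le_exp.2 (mul_le_mul_of_nonneg_left hxle hb.le)
    nlinarith [norm_nonneg (f x), hC x, Real.exp_nonneg (-α.re * x)]
  set F : ℝ → ℂ := fun u => ∫ r in Set.Iic u, w r with hFdef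
  have hwIic : ∀ u : ℝ, IntegrableOn w (Set.Iic u) := by
    intro u
    have h1 := (kint hα hfm hC u).const_mul (Complex.exp (-(α * (u:ℂ))))
    have h2 : (fun r : ℝ =>
        Complex.exp (-(α * (u:ℂ))) * (Complex.exp (α * ((u:ℂ) - (r:ℂ))) * f r)) = w := by
      funext r
      rw [hwdef, ← mul_assoc, ← Complex.exp_add]
      congr 2
      ring
    rwa [h2] at h1
  have hG0 : ∀ u : ℝ, F u = F 0 + ∫ x in (0:ℝ)..u, w x := by
    intro u
    exact sub_eq_iff_eq_add'.mp (integral_Iic_sub_Iic (hwIic 0) (hwIic u))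
  have hFd : ∀ u : ℝ, HasDerivWithinAt F (Complex.exp (-(α * (u:ℂ))) * ftil u) (Set.Ici u) u := by
    intro u
    have hd : HasDerivWithinAt (fun v => ∫ x in (0:ℝ)..v, w x)
        (Complex.exp (-(α * (u:ℂ))) * ftil u) (Set.Ici u) u := by
      refine intervalIntegral.integral_hasDerivWithinAt_of_tendsto_ae_right
        (t := Set.Ioi u) (hwint 0 u) hwm.stronglyMeasurableAtFilter ?_
      refine Tendsto.mono_left ?_ inf_le_left
      have h1 : Tendsto (fun x : ℝ => Complex.exp (-(α * (x:ℂ)))) (𝓝[>] u)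
          (𝓝 (Complex.exp (-(α * (u:ℂ))))) :=
        (((Complex.continuous_exp.comp
          (continuous_const.mul Complex.continuous_ofReal).neg)).tendsto u).mono_left
          nhdsWithin_le_nhds
      exact h1.mul (hP u)
    have hFfun : F = fun v => F 0 + ∫ x in (0:ℝ)..v, w x := funext hG0
    rw [hFfun]
    exact hd.const_add (F 0)
  have hx₁F : ∀ u : ℝ, Tc α f u = Complex.exp (α * (u:ℂ)) * F u := by
    intro u
    rw [Tc, show (fun r : ℝ => Complex.exp (α * ((u:ℂ) - (r:ℂ))) * f r) =
        fun r => Complex.exp (α * (u:ℂ)) * w r from funext fun r => by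
          rw [hwdef, ← mul_assoc, ← Complex.exp_add]; congr 2; ring]
    exact MeasureTheory.integral_const_mul _ _
  have hx₁d : ∀ u : ℝ, HasDerivWithinAt (Tc α f) (α * Tc α f u + ftil u) (Set.Ici u) u := by
    intro u
    have he : HasDerivAt (fun v : ℝ => Complex.exp (α * (v:ℂ))) (α * Complex.exp (α * (u:ℂ))) u :=
      hasDerivAt_cexp_real α u
    have hprod := he.hasDerivWithinAt.mul (hFd u)
    have hTeq : Tc α f = fun v : ℝ => Complex.exp (α * (v:ℂ)) * F v := funext hx₁F
    have hval : α * Tc α f u + ftil u = α * Complex.exp (α * (u:ℂ)) * F u +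
        Complex.exp (α * (u:ℂ)) * (Complex.exp (-(α * (u:ℂ))) * ftil u) := by
      rw [hx₁F u, ← mul_assoc (Complex.exp (α * (u:ℂ))), ← Complex.exp_add,
        show α * (u:ℂ) + -(α * (u:ℂ)) = 0 by ring, Complex.exp_zero, one_mul]
      ring
    rw [hval, hTeq]
    exact hprod
  have part3 : ∀ s t : ℝ, s ≤ t → Tc α f t = Tc α f s + ∫ u in s..t, (α * Tc α f u + f u) := by
    intro s t hst
    have hint : IntervalIntegrable (fun u => α * Tc α f u + ftil u) volume s t := by
      refine bdd_intervalIntegrable (((hx₁cont.aestronglyMeasurable).const_mul α).add hftilm)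
        (D := ‖α‖ * (C / (-α.re)) + C) ?_
      intro x _
      calc ‖α * Tc α f x + ftil x‖ ≤ ‖α * Tc α f x‖ + ‖ftil x‖ := norm_add_le _ _
        _ ≤ ‖α‖ * (C / (-α.re)) + C := by
          rw [norm_mul]
          exact add_le_add (mul_le_mul_of_nonneg_left (hx₁bdd x) (norm_nonneg α)) (hftilC x)
    have hFTC := intervalIntegral.integral_eq_sub_of_hasDeriv_right_of_le hst
      (hx₁cont.continuousOn) (fun u _ => (hx₁d u).mono Set.Ioi_subset_Ici_self) hint
    have hcong : ∫ u in s..t, (α * Tc α f u + f u) = ∫ u in s..t, (α * Tc α f u + ftil u) := by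
      refine intervalIntegral.integral_congr_ae ?_
      filter_upwards [hfeq] with u hu _
      rw [hu]
    rw [hcong, hFTC]
    ring
  -- ### Part 4: uniqueness
  refine ⟨part1, part2, part3, ?_⟩
  intro y hy hyeq
  obtain ⟨⟨D, hD⟩, hycont, -⟩ := hy
  set z : ℝ → ℂ := fun t => y t - Tc α f t with hzdef
  have hzcont : Continuous z := hycont.sub hx₁cont
  set B : ℝ := D + C / (-α.re) with hBdef
  have hzB : ∀ t, ‖z t‖ ≤ B := fun t => (norm_sub_le _ _).trans (add_le_add (hD t) (hx₁bdd t))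
  have hzm : AEStronglyMeasurable z volume := hzcont.aestronglyMeasurable
  have hyint : ∀ s t : ℝ, IntervalIntegrable (fun u => α * y u + f u) volume s t := by
    intro s t
    refine bdd_intervalIntegrable ((hycont.aestronglyMeasurable.const_mul α).add hfm)
      (D := ‖α‖ * D + C) fun x _ => (norm_add_le _ _).trans ?_
    rw [norm_mul]
    exact add_le_add (mul_le_mul_of_nonneg_left (hD x) (norm_nonneg α)) (hC x)
  have hxint : ∀ s t : ℝ, IntervalIntegrable (fun u => α * Tc α f u + f u) volume s t := by
    intro s t
    refine bdd_intervalIntegrable ((hx₁cont.aestronglyMeasurable.const_mul α).add hfm)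
      (D := ‖α‖ * (C / (-α.re)) + C) fun x _ => (norm_add_le _ _).trans ?_
    rw [norm_mul]
    exact add_le_add (mul_le_mul_of_nonneg_left (hx₁bdd x) (norm_nonneg α)) (hC x)
  have hz1 : ∀ s t : ℝ, s ≤ t → z t = z s + ∫ u in s..t, α * z u := by
    intro s t hst
    have h3 : (∫ u in s..t, (α * y u + f u)) - ∫ u in s..t, (α * Tc α f u + f u) =
        ∫ u in s..t, α * z u := by
      rw [← intervalIntegral.integral_sub (hyint s t) (hxint s t)]
      refine intervalIntegral.integral_congr fun u _ => ?_
      show α * y u + f u - (α * Tc α f u + f u) = α * (y u - Tc α f u)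
      ring
    have key : y t - Tc α f t = (y s - Tc α f s) + ∫ u in s..t, α * z u := by
      rw [hyeq s t hst, part3 s t hst, ← h3]
      ring
    exact key
  have hz2 : ∀ s t : ℝ, z t = z s + ∫ u in s..t, α * z u := by
    intro s t
    rcases le_total s t with hle | hle
    · exact hz1 s t hle
    · have h1 := hz1 t s hle
      rw [intervalIntegral.integral_symm, h1]
      ring
  have hzd : ∀ t : ℝ, HasDerivAt z (α * z t) t := by
    intro t
    have hzint : IntervalIntegrable (fun u => α * z u) volume 0 t :=
      bdd_intervalIntegrable (hzm.const_mul α) (D := ‖α‖ * B) fun x _ => by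
        rw [norm_mul]; exact mul_le_mul_of_nonneg_left (hzB x) (norm_nonneg α)
    have hd := intervalIntegral.integral_hasDerivAt_right hzint
      (hzm.const_mul α).stronglyMeasurableAtFilter
      ((continuous_const.mul hzcont).continuousAt)
    have hfun : z = fun u => z 0 + ∫ x in (0:ℝ)..u, α * z x := funext fun u => hz2 0 u
    have h2 := hd.const_add (z 0)
    rwa [← hfun] at h2
  have hwconst : ∀ s t : ℝ, Complex.exp ((-α) * (t:ℂ)) * z t =
      Complex.exp ((-α) * (s:ℂ)) * z s := by
    have hder : ∀ x : ℝ, HasDerivAt (fun t : ℝ => Complex.exp ((-α) * (t:ℂ)) * z t) 0 x := by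
      intro x
      have h1 := (hasDerivAt_cexp_real (-α) x).mul (hzd x)
      have h3 : (-α) * Complex.exp ((-α) * (x:ℂ)) * z x +
          Complex.exp ((-α) * (x:ℂ)) * (α * z x) = 0 := by ring
      rwa [h3] at h1
    intro s t
    exact is_const_of_deriv_eq_zero (fun x => (hder x).differentiableAt)
      (fun x => (hder x).deriv) t s
  have hdecay : ∀ t : ℝ, ∀ n : ℕ, ‖z t‖ ≤ Real.exp (α.re * n) * B := by
    intro t n
    have h1 := hwconst (t - n) t
    have h3 : Complex.exp (α * (t:ℂ)) * (Complex.exp ((-α) * (t:ℂ)) * z t) = z t := by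
      rw [← mul_assoc, ← Complex.exp_add, show α * (t:ℂ) + (-α) * (t:ℂ) = 0 by ring,
        Complex.exp_zero, one_mul]
    have h2 : z t = Complex.exp (α * (t:ℂ)) *
        (Complex.exp ((-α) * (((t - n : ℝ)):ℂ)) * z (t - n)) := by
      rw [← h3, h1]
    calc ‖z t‖ = ‖Complex.exp (α * (t:ℂ)) * Complex.exp ((-α) * (((t - n : ℝ)):ℂ))‖ *
        ‖z (t - n)‖ := by rw [h2, ← mul_assoc, norm_mul]
      _ = Real.exp (α.re * n) * ‖z (t - n)‖ := by
        rw [← Complex.exp_add,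
          show α * (t:ℂ) + (-α) * (((t - n : ℝ)):ℂ) = α * (((n : ℝ)):ℂ) by push_cast; ring,
          knorm]
      _ ≤ Real.exp (α.re * n) * B := mul_le_mul_of_nonneg_left (hzB _) (Real.exp_nonneg _)
  have hzero : ∀ t : ℝ, z t = 0 := by
    intro t
    have hlim : Tendsto (fun n : ℕ => Real.exp (α.re * (n:ℝ)) * B) atTop (𝓝 0) := by
      have h1 : Tendsto (fun n : ℕ => α.re * (n:ℝ)) atTop atBot :=
        Tendsto.const_mul_atTop_of_neg hα tendsto_natCast_atTop_atTop
      have h2 := (Real.tendsto_exp_atBot.comp h1).mul_const B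
      simpa using h2
    have hle : ‖z t‖ ≤ 0 := ge_of_tendsto' hlim fun n => hdecay t n
    exact norm_le_zero_iff.1 hle
  funext t
  have h := hzero t
  exact sub_eq_zero.mp h
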